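/- For any real k ≠ 0, the function q(x,t) = 2k e^{-k²t}/(e^{kx} + e^{-kx}) satisfies the reverse space-time nonlinear Schrödinger equation q_t(x,t) + q_{xx}(x,t) + 2 q(x,t)² q(-x,-t) = 0 for all real x, t. -/

import Mathlib

theorem stmt_8 (k : ℝ) (hk : k ≠ 0)
    (q : ℝ → ℝ → ℝ)
    (hq : ∀ x t : ℝ, q x t =
      2 * k * Real.exp (-k^2 * t) / (Real.exp (k * x) + Real.exp (-(k * x)))) :
    ∀ x t : ℝ,
      deriv (fun s => q x s) t + iteratedDeriv 2 (fun y => q y t) x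
        + 2 * (q x t)^2 * q (-x) (-t) = 0 := by
  intro x t
  set c : ℝ := 2 * k * Real.exp (-k^2 * t) with hc
  have hden : ∀ y : ℝ, Real.exp (k*y) + Real.exp (-(k*y)) > 0 := fun y =>
    add_pos (Real.exp_pos _) (Real.exp_pos _)
  -- derivative of denominator
  have hD : ∀ y : ℝ, HasDerivAt (fun y => Real.exp (k*y) + Real.exp (-(k*y)))
      (k * Real.exp (k*y) - k * Real.exp (-(k*y))) y := by
    intro y
    have h1 : HasDerivAt (fun y : ℝ => Real.exp (k*y)) (Real.exp (k*y) * k) y := by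
      simpa using ((hasDerivAt_id y).const_mul k).exp
    have h2 : HasDerivAt (fun y : ℝ => Real.exp (-(k*y))) (Real.exp (-(k*y)) * (-k)) y := by
      have := (((hasDerivAt_id y).const_mul k).neg).exp
      simpa using this
    have := h1.add h2
    exact this.congr_deriv (by ring)
  -- first x-derivative of q(·,t)
  have hfun : (fun y => q y t) = fun y => c / (Real.exp (k*y) + Real.exp (-(k*y))) := by
    funext y; rw [hq]
  have hd1 : ∀ y : ℝ, HasDerivAt (fun y => c / (Real.exp (k*y) + Real.exp (-(k*y))))
      ((0 * (Real.exp (k*y) + Real.exp (-(k*y))) - c * (k * Real.exp (k*y) - k * Real.exp (-(k*y)))) / (Real.exp (k*y) + Real.exp (-(k*y)))^2) y := by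
    intro y
    exact (hasDerivAt_const y c).div (hD y) (ne_of_gt (hden y))
  have hderiv1 : deriv (fun y => q y t) = fun y =>
      (0 * (Real.exp (k*y) + Real.exp (-(k*y))) - c * (k * Real.exp (k*y) - k * Real.exp (-(k*y)))) / (Real.exp (k*y) + Real.exp (-(k*y)))^2 := by
    funext y
    rw [hfun]
    exact (hd1 y).deriv
  -- second x-derivative
  have hN : ∀ y : ℝ, HasDerivAt (fun y => 0 * (Real.exp (k*y) + Real.exp (-(k*y))) - c * (k * Real.exp (k*y) - k * Real.exp (-(k*y))))
      (0 * (k * Real.exp (k*y) - k * Real.exp (-(k*y))) - c * (k * (k * Real.exp (k*y)) - k * (- k * Real.exp (-(k*y))))) y := by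
    intro y
    have h1 : HasDerivAt (fun y : ℝ => Real.exp (k*y)) (Real.exp (k*y) * k) y := by
      simpa using ((hasDerivAt_id y).const_mul k).exp
    have h2 : HasDerivAt (fun y : ℝ => Real.exp (-(k*y))) (Real.exp (-(k*y)) * (-k)) y := by
      have := (((hasDerivAt_id y).const_mul k).neg).exp
      simpa using this
    have hA := ((hD y).const_mul (0:ℝ))
    have hB := (((h1.const_mul k).sub (h2.const_mul k)).const_mul c)
    have := hA.sub hB
    exact this.congr_deriv (by ring)
  have hD2 : ∀ y : ℝ, HasDerivAt (fun y => (Real.exp (k*y) + Real.exp (-(k*y)))^2)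
      (2 * (Real.exp (k*y) + Real.exp (-(k*y))) * (k * Real.exp (k*y) - k * Real.exp (-(k*y)))) y := by
    intro y
    have := (hD y).pow 2
    exact this.congr_deriv (by ring)
  have hd2 : HasDerivAt (fun y =>
      (0 * (Real.exp (k*y) + Real.exp (-(k*y))) - c * (k * Real.exp (k*y) - k * Real.exp (-(k*y)))) / (Real.exp (k*y) + Real.exp (-(k*y)))^2)
      (((0 * (k * Real.exp (k*x) - k * Real.exp (-(k*x))) - c * (k * (k * Real.exp (k*x)) - k * (- k * Real.exp (-(k*x))))) * (Real.exp (k*x) + Real.exp (-(k*x)))^2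
        - (0 * (Real.exp (k*x) + Real.exp (-(k*x))) - c * (k * Real.exp (k*x) - k * Real.exp (-(k*x)))) * (2 * (Real.exp (k*x) + Real.exp (-(k*x))) * (k * Real.exp (k*x) - k * Real.exp (-(k*x)))))
        / ((Real.exp (k*x) + Real.exp (-(k*x)))^2)^2) x :=
    (hN x).div (hD2 x) (pow_ne_zero 2 (ne_of_gt (hden x)))
  have hiter : iteratedDeriv 2 (fun y => q y t) x =
      ((0 * (k * Real.exp (k*x) - k * Real.exp (-(k*x))) - c * (k * (k * Real.exp (k*x)) - k * (- k * Real.exp (-(k*x))))) * (Real.exp (k*x) + Real.exp (-(k*x)))^2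
        - (0 * (Real.exp (k*x) + Real.exp (-(k*x))) - c * (k * Real.exp (k*x) - k * Real.exp (-(k*x)))) * (2 * (Real.exp (k*x) + Real.exp (-(k*x))) * (k * Real.exp (k*x) - k * Real.exp (-(k*x)))))
        / ((Real.exp (k*x) + Real.exp (-(k*x)))^2)^2 := by
    rw [show (2:ℕ) = 1 + 1 from rfl, iteratedDeriv_succ, iteratedDeriv_one, hderiv1]
    exact hd2.deriv
  -- time derivative
  have hfunt : (fun s => q x s) = fun s =>
      2 * k * Real.exp (-k^2 * s) / (Real.exp (k*x) + Real.exp (-(k*x))) := by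
    funext s; rw [hq]
  have hdt : HasDerivAt (fun s => 2 * k * Real.exp (-k^2 * s) / (Real.exp (k*x) + Real.exp (-(k*x))))
      (2 * k * (Real.exp (-k^2 * t) * (-k^2)) / (Real.exp (k*x) + Real.exp (-(k*x)))) t := by
    have h1 : HasDerivAt (fun s : ℝ => Real.exp (-k^2 * s)) (Real.exp (-k^2 * t) * (-k^2)) t := by
      simpa using ((hasDerivAt_id t).const_mul (-k^2)).exp
    exact (h1.const_mul (2*k)).div_const _
  have hderivt : deriv (fun s => q x s) t =
      2 * k * (Real.exp (-k^2 * t) * (-k^2)) / (Real.exp (k*x) + Real.exp (-(k*x))) := by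
    rw [hfunt]; exact hdt.deriv
  -- assemble
  rw [hderivt, hiter, hq, hq]
  have e1 : k * -x = -(k*x) := by ring
  rw [e1, neg_neg]
  have hb : Real.exp (-(k*x)) = (Real.exp (k*x))⁻¹ := Real.exp_neg _
  have hv : Real.exp (-k^2 * -t) = (Real.exp (-k^2*t))⁻¹ := by
    rw [show -k^2 * -t = -(-k^2*t) by ring, Real.exp_neg]
  rw [hb, hv, hc]
  have ha := (Real.exp_pos (k*x)).ne'
  have hu := (Real.exp_pos (-k^2*t)).ne'
  have hne : Real.exp (k*x) + (Real.exp (k*x))⁻¹ ≠ 0 := by positivity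
  field_simp
  ring
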